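/- arXiv:2007.10149 — 2 statements merged into one kernel-verified Lean document; each statement's English description precedes it below -/
import Mathlib

section
/- Validity of Benders cuts (inequality (10) of the paper): fix t < N and ψ : ℝⁿ → EReal with ψ(x) ≤ Q (t+1) (x) for all x ∈ ℝⁿ. Let x̂ ∈ ℝⁿ be such that (T̂ t ψ)(x̂) is finite, and let μ ∈ ℝⁿ be a subgradient of T̂ t ψ at x̂, i.e. (T̂ t ψ)(x) ≥ (T̂ t ψ)(x̂) + ⟪μ, x − x̂⟫ for all x ∈ ℝⁿ. Then the Benders cut is valid for the true cost-to-go at stage t: (T̂ t ψ)(x̂) + ⟪μ, x − x̂⟫ ≤ Q t (x) for all x ∈ ℝⁿ. -/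
noncomputable section



/-- Mixed-integer lattice: vectors whose first `n₁` coordinates are integers. -/
def mixedLattice (n n₁ : ℕ) : Set (EuclideanSpace ℝ (Fin n)) :=
  {x | ∀ i : Fin n, (i : ℕ) < n₁ → x i ∈ Set.range (Int.cast : ℤ → ℝ)}

/-- Linear stage cost `f t (x, u) = ⟪c t, x⟫ + ⟪d t, u⟫`. -/
def stageCost {n m : ℕ} (c : ℕ → EuclideanSpace ℝ (Fin n)) (d : ℕ → EuclideanSpace ℝ (Fin m))
    (t : ℕ) (x : EuclideanSpace ℝ (Fin n)) (u : EuclideanSpace ℝ (Fin m)) : ℝ :=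
  inner ℝ (c t) x + inner ℝ (d t) u

/-- Generic stage (Bellman) operator with control restriction `SU` and state
restriction `SX`.  The mixed-integer operator `T t` takes `SU = M_u`, `SX = M_x`;
the relaxed operator `T̂ t` takes `SU = Set.univ`, `SX = Set.univ`. -/
def stageOp {n m : ℕ}
    (A : ℕ → EuclideanSpace ℝ (Fin n) →ₗ[ℝ] EuclideanSpace ℝ (Fin n))
    (B : ℕ → EuclideanSpace ℝ (Fin m) →ₗ[ℝ] EuclideanSpace ℝ (Fin n))
    (c : ℕ → EuclideanSpace ℝ (Fin n)) (d : ℕ → EuclideanSpace ℝ (Fin m))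
    (U : ℕ → Set (EuclideanSpace ℝ (Fin m))) (X : ℕ → Set (EuclideanSpace ℝ (Fin n)))
    (SU : Set (EuclideanSpace ℝ (Fin m))) (SX : Set (EuclideanSpace ℝ (Fin n)))
    (t : ℕ) (ψ : EuclideanSpace ℝ (Fin n) → EReal)
    (x : EuclideanSpace ℝ (Fin n)) : EReal :=
  ⨅ u : {u : EuclideanSpace ℝ (Fin m) //
      u ∈ U t ∩ SU ∧ A t x + B t u ∈ X (t + 1) ∩ SX},
    ((stageCost c d t x u.1 : ℝ) : EReal) + ψ (A t x + B t u.1)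

/-- A feasible trajectory of the mixed-integer MPC problem from `xbar`. -/
def FeasTraj {n m : ℕ} (N n₁ m₁ : ℕ)
    (A : ℕ → EuclideanSpace ℝ (Fin n) →ₗ[ℝ] EuclideanSpace ℝ (Fin n))
    (B : ℕ → EuclideanSpace ℝ (Fin m) →ₗ[ℝ] EuclideanSpace ℝ (Fin n))
    (U : ℕ → Set (EuclideanSpace ℝ (Fin m))) (X : ℕ → Set (EuclideanSpace ℝ (Fin n)))
    (xbar : EuclideanSpace ℝ (Fin n))
    (x : Fin (N + 1) → EuclideanSpace ℝ (Fin n))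
    (u : Fin N → EuclideanSpace ℝ (Fin m)) : Prop :=
  x 0 = xbar ∧
  (∀ t : Fin N, x t.succ = A (t : ℕ) (x t.castSucc) + B (t : ℕ) (u t)) ∧
  (∀ t : Fin N, u t ∈ U (t : ℕ) ∩ mixedLattice m m₁) ∧
  (∀ t : Fin (N + 1), 1 ≤ (t : ℕ) → x t ∈ X (t : ℕ) ∩ mixedLattice n n₁)

/-- Optimal value of the mixed-integer MPC problem: infimum (in `EReal`) of the total
stage cost over all feasible trajectories; the infimum over the empty set is `+∞`. -/
def mpcValue {n m : ℕ} (N n₁ m₁ : ℕ)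
    (A : ℕ → EuclideanSpace ℝ (Fin n) →ₗ[ℝ] EuclideanSpace ℝ (Fin n))
    (B : ℕ → EuclideanSpace ℝ (Fin m) →ₗ[ℝ] EuclideanSpace ℝ (Fin n))
    (c : ℕ → EuclideanSpace ℝ (Fin n)) (d : ℕ → EuclideanSpace ℝ (Fin m))
    (U : ℕ → Set (EuclideanSpace ℝ (Fin m))) (X : ℕ → Set (EuclideanSpace ℝ (Fin n)))
    (xbar : EuclideanSpace ℝ (Fin n)) : EReal :=
  ⨅ p : {q : (Fin (N + 1) → EuclideanSpace ℝ (Fin n)) × (Fin N → EuclideanSpace ℝ (Fin m)) //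
      FeasTraj N n₁ m₁ A B U X xbar q.1 q.2},
    ((∑ t : Fin N, stageCost c d (t : ℕ) (p.1.1 t.castSucc) (p.1.2 t) : ℝ) : EReal)

/-- Validity of Benders cuts, inequality (10) of the paper.  If
`ψ ≤ Q (t+1)` pointwise, `x̂` is a point where the relaxed stage value `(T̂ t ψ)(x̂)` is
finite, and `μ` is a subgradient of `T̂ t ψ` at `x̂`, then the Benders cut
`(T̂ t ψ)(x̂) + ⟪μ, x − x̂⟫` underestimates the true cost-to-go `Q t` everywhere. -/
theorem benders_cut_valid
    {n m : ℕ} (n₁ n₂ m₁ m₂ : ℕ) (hn : n = n₁ + n₂) (hm : m = m₁ + m₂) (N : ℕ)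
    (A : ℕ → EuclideanSpace ℝ (Fin n) →ₗ[ℝ] EuclideanSpace ℝ (Fin n))
    (B : ℕ → EuclideanSpace ℝ (Fin m) →ₗ[ℝ] EuclideanSpace ℝ (Fin n))
    (c : ℕ → EuclideanSpace ℝ (Fin n)) (d : ℕ → EuclideanSpace ℝ (Fin m))
    (U : ℕ → Set (EuclideanSpace ℝ (Fin m))) (X : ℕ → Set (EuclideanSpace ℝ (Fin n)))
    (Q : ℕ → EuclideanSpace ℝ (Fin n) → EReal)
    (hQN : ∀ x, Q N x = 0)
    (hQrec : ∀ t < N, ∀ x, Q t x =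
      stageOp A B c d U X (mixedLattice m m₁) (mixedLattice n n₁) t (Q (t + 1)) x)
    (t : ℕ) (ht : t < N) (ψ : EuclideanSpace ℝ (Fin n) → EReal)
    (hψ : ∀ x, ψ x ≤ Q (t + 1) x)
    (xhat : EuclideanSpace ℝ (Fin n))
    (hfin_top : stageOp A B c d U X Set.univ Set.univ t ψ xhat ≠ ⊤)
    (hfin_bot : stageOp A B c d U X Set.univ Set.univ t ψ xhat ≠ ⊥)
    (μ : EuclideanSpace ℝ (Fin n))
    (hsub : ∀ x, stageOp A B c d U X Set.univ Set.univ t ψ x ≥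
      stageOp A B c d U X Set.univ Set.univ t ψ xhat + ((inner ℝ μ (x - xhat) : ℝ) : EReal)) :
    ∀ x : EuclideanSpace ℝ (Fin n),
      stageOp A B c d U X Set.univ Set.univ t ψ xhat + ((inner ℝ μ (x - xhat) : ℝ) : EReal) ≤
        Q t x := by
  intro x
  rw [hQrec t ht x]
  refine le_trans (hsub x) ?_
  -- relaxed operator at x ≤ mixed-integer operator with Q (t+1)
  unfold stageOp
  refine le_iInf fun u => ?_
  obtain ⟨u, hu⟩ := u
  refine iInf_le_of_le ⟨u, ?_⟩ ?_
  · constructor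
    · exact ⟨hu.1.1, Set.mem_univ _⟩
    · exact ⟨hu.2.1, Set.mem_univ _⟩
  · exact add_le_add le_rfl (hψ _)
end
end

section
/- Validity of multi-scale (block) Benders cuts: fix stages t < t' ≤ N. Define the block mixed-integer operator (T_{[t,t')} ψ)(x) as the infimum of ∑_{s=t}^{t'−1} f s (x s, u s) + ψ(x t') over all inner trajectories with x t = x, x (s+1) = A s (x s) + B s (u s), u s ∈ 𝒰 s ∩ M_u for t ≤ s < t', and x s ∈ 𝒳 s ∩ M_x for t < s ≤ t'; define the relaxed block operator T̂_{[t,t')} by the same formula with the integrality sets M_u, M_x dropped. Suppose ψ : ℝⁿ → EReal satisfies ψ ≤ Q t' pointwise, let x̂ ∈ ℝⁿ with (T̂_{[t,t')} ψ)(x̂) finite, and let μ ∈ ℝⁿ be a subgradient of T̂_{[t,t')} ψ at x̂. Then the block Benders cut is valid: (T̂_{[t,t')} ψ)(x̂) + ⟪μ, x − x̂⟫ ≤ Q t (x) for all x ∈ ℝⁿ. -/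
noncomputable section



/-- Block (multi-scale) stage operator over the stages `t, t+1, …, t'−1` with control
restriction `SU` and state restriction `SX`: the mixed-integer block operator
`T_{[t,t')}` takes `SU = M_u`, `SX = M_x`, the relaxed block operator `T̂_{[t,t')}` takes
`SU = Set.univ`, `SX = Set.univ`. -/
def blockOp {n m : ℕ}
    (A : ℕ → EuclideanSpace ℝ (Fin n) →ₗ[ℝ] EuclideanSpace ℝ (Fin n))
    (B : ℕ → EuclideanSpace ℝ (Fin m) →ₗ[ℝ] EuclideanSpace ℝ (Fin n))
    (c : ℕ → EuclideanSpace ℝ (Fin n)) (d : ℕ → EuclideanSpace ℝ (Fin m))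
    (U : ℕ → Set (EuclideanSpace ℝ (Fin m))) (X : ℕ → Set (EuclideanSpace ℝ (Fin n)))
    (SU : Set (EuclideanSpace ℝ (Fin m))) (SX : Set (EuclideanSpace ℝ (Fin n)))
    (t t' : ℕ) (ψ : EuclideanSpace ℝ (Fin n) → EReal)
    (x : EuclideanSpace ℝ (Fin n)) : EReal :=
  ⨅ p : {q : (ℕ → EuclideanSpace ℝ (Fin n)) × (ℕ → EuclideanSpace ℝ (Fin m)) //
      q.1 t = x ∧
      (∀ s, t ≤ s → s < t' → q.1 (s + 1) = A s (q.1 s) + B s (q.2 s)) ∧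
      (∀ s, t ≤ s → s < t' → q.2 s ∈ U s ∩ SU) ∧
      (∀ s, t < s → s ≤ t' → q.1 s ∈ X s ∩ SX)},
    ((∑ s ∈ Finset.Ico t t', stageCost c d s (p.1.1 s) (p.1.2 s) : ℝ) : EReal) + ψ (p.1.1 t')

/-- Validity of multi-scale (block) Benders cuts.  For stages
`t < t' ≤ N`, if `ψ ≤ Q t'` pointwise, `(T̂_{[t,t')} ψ)(x̂)` is finite and `μ` is a
subgradient of `T̂_{[t,t')} ψ` at `x̂`, then the block Benders cut underestimates the
true cost-to-go `Q t` everywhere. -/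
theorem block_benders_cut_valid
    {n m : ℕ} (n₁ n₂ m₁ m₂ : ℕ) (hn : n = n₁ + n₂) (hm : m = m₁ + m₂) (N : ℕ)
    (A : ℕ → EuclideanSpace ℝ (Fin n) →ₗ[ℝ] EuclideanSpace ℝ (Fin n))
    (B : ℕ → EuclideanSpace ℝ (Fin m) →ₗ[ℝ] EuclideanSpace ℝ (Fin n))
    (c : ℕ → EuclideanSpace ℝ (Fin n)) (d : ℕ → EuclideanSpace ℝ (Fin m))
    (U : ℕ → Set (EuclideanSpace ℝ (Fin m))) (X : ℕ → Set (EuclideanSpace ℝ (Fin n)))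
    (Q : ℕ → EuclideanSpace ℝ (Fin n) → EReal)
    (hQN : ∀ x, Q N x = 0)
    (hQrec : ∀ t < N, ∀ x, Q t x =
      stageOp A B c d U X (mixedLattice m m₁) (mixedLattice n n₁) t (Q (t + 1)) x)
    (t t' : ℕ) (htt' : t < t') (ht'N : t' ≤ N)
    (ψ : EuclideanSpace ℝ (Fin n) → EReal)
    (hψ : ∀ x, ψ x ≤ Q t' x)
    (xhat : EuclideanSpace ℝ (Fin n))
    (hfin_top : blockOp A B c d U X Set.univ Set.univ t t' ψ xhat ≠ ⊤)
    (hfin_bot : blockOp A B c d U X Set.univ Set.univ t t' ψ xhat ≠ ⊥)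
    (μ : EuclideanSpace ℝ (Fin n))
    (hsub : ∀ x, blockOp A B c d U X Set.univ Set.univ t t' ψ x ≥
      blockOp A B c d U X Set.univ Set.univ t t' ψ xhat + ((inner ℝ μ (x - xhat) : ℝ) : EReal)) :
    ∀ x : EuclideanSpace ℝ (Fin n),
      blockOp A B c d U X Set.univ Set.univ t t' ψ xhat + ((inner ℝ μ (x - xhat) : ℝ) : EReal) ≤
        Q t x := by
  have key : ∀ k tt, tt + k = t' → ∀ x : EuclideanSpace ℝ (Fin n),
      blockOp A B c d U X Set.univ Set.univ tt t' ψ x ≤ Q tt x := by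
    intro k
    induction k with
    | zero =>
      intro tt htt x
      simp only [Nat.add_zero] at htt
      subst htt
      refine le_trans ?_ (hψ x)
      have hle := iInf_le
        (fun p : {q : (ℕ → EuclideanSpace ℝ (Fin n)) × (ℕ → EuclideanSpace ℝ (Fin m)) //
            q.1 tt = x ∧
            (∀ s, tt ≤ s → s < tt → q.1 (s + 1) = A s (q.1 s) + B s (q.2 s)) ∧
            (∀ s, tt ≤ s → s < tt → q.2 s ∈ U s ∩ Set.univ) ∧
            (∀ s, tt < s → s ≤ tt → q.1 s ∈ X s ∩ Set.univ)} =>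
          ((∑ s ∈ Finset.Ico tt tt, stageCost c d s (p.1.1 s) (p.1.2 s) : ℝ) : EReal)
            + ψ (p.1.1 tt))
        ⟨(fun _ => x, fun _ => 0), rfl, fun s h1 h2 => absurd (h1.trans_lt h2) (lt_irrefl _),
          fun s h1 h2 => absurd (h1.trans_lt h2) (lt_irrefl _),
          fun s h1 h2 => absurd (h1.trans_le h2) (lt_irrefl _)⟩
      simpa [blockOp] using hle
    | succ k ih =>
      intro tt htt x
      have h1 : tt < t' := by omega
      have h2 : tt < N := lt_of_lt_of_le h1 ht'N
      rw [hQrec tt h2 x, stageOp]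
      refine le_iInf fun u => ?_
      obtain ⟨⟨huU, _⟩, hxX⟩ := u.2
      set x' := A tt x + B tt u.1 with hx'
      have hIH : blockOp A B c d U X Set.univ Set.univ (tt + 1) t' ψ x' ≤ Q (tt + 1) x' :=
        ih (tt + 1) (by omega) x'
      have hf : (stageCost c d tt x u.1 : EReal) ≠ ⊥ ∧ (stageCost c d tt x u.1 : EReal) ≠ ⊤ :=
        ⟨EReal.coe_ne_bot _, EReal.coe_ne_top _⟩
      -- reduce to: blockOp tt ≤ f + blockOp (tt+1) x'
      refine le_trans ?_ (add_le_add (le_refl _) hIH)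
      -- show blockOp tt - f ≤ blockOp (tt+1) x', then convert
      have hmain : blockOp A B c d U X Set.univ Set.univ tt t' ψ x
          - (stageCost c d tt x u.1 : EReal)
          ≤ blockOp A B c d U X Set.univ Set.univ (tt + 1) t' ψ x' := by
        refine le_iInf fun p' => ?_
        rw [EReal.sub_le_iff_le_add (Or.inl hf.1) (Or.inl hf.2)]
        obtain ⟨hp0, hpdyn, hpU, hpX⟩ := p'.2
        -- construct a trajectory for the block starting at tt
        set q1 : ℕ → EuclideanSpace ℝ (Fin n) := fun s => if s ≤ tt then x else p'.1.1 s with hq1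
        set q2 : ℕ → EuclideanSpace ℝ (Fin m) := fun s => if s ≤ tt then u.1 else p'.1.2 s with hq2
        have hq1t : ∀ s, tt < s → q1 s = p'.1.1 s := fun s hs => by
          simp [hq1, Nat.not_le.mpr hs]
        have hq2t : ∀ s, tt < s → q2 s = p'.1.2 s := fun s hs => by
          simp [hq2, Nat.not_le.mpr hs]
        have hfeas : q1 tt = x ∧
            (∀ s, tt ≤ s → s < t' → q1 (s + 1) = A s (q1 s) + B s (q2 s)) ∧
            (∀ s, tt ≤ s → s < t' → q2 s ∈ U s ∩ Set.univ) ∧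
            (∀ s, tt < s → s ≤ t' → q1 s ∈ X s ∩ Set.univ) := by
          refine ⟨by simp [hq1], ?_, ?_, ?_⟩
          · intro s hs1 hs2
            rcases eq_or_lt_of_le hs1 with h | h
            · subst h
              rw [hq1t (tt + 1) (by omega), hp0]
              simp [hq1, hq2, hx']
            · rw [hq1t (s + 1) (by omega), hq1t s h, hq2t s h]
              exact hpdyn s (by omega) hs2
          · intro s hs1 hs2
            rcases eq_or_lt_of_le hs1 with h | h
            · subst h
              exact ⟨by simpa [hq2] using huU, Set.mem_univ _⟩
            · rw [hq2t s h]
              exact ⟨(hpU s (by omega) hs2).1, Set.mem_univ _⟩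
          · intro s hs1 hs2
            rcases Nat.lt_or_ge (tt + 1) s with h | h
            · rw [hq1t s hs1]
              exact ⟨(hpX s (by omega) hs2).1, Set.mem_univ _⟩
            · have hs : s = tt + 1 := by omega
              subst hs
              rw [hq1t _ hs1, hp0]
              exact ⟨hxX.1, Set.mem_univ _⟩
        have hle := iInf_le
          (fun p : {q : (ℕ → EuclideanSpace ℝ (Fin n)) × (ℕ → EuclideanSpace ℝ (Fin m)) //
              q.1 tt = x ∧
              (∀ s, tt ≤ s → s < t' → q.1 (s + 1) = A s (q.1 s) + B s (q.2 s)) ∧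
              (∀ s, tt ≤ s → s < t' → q.2 s ∈ U s ∩ Set.univ) ∧
              (∀ s, tt < s → s ≤ t' → q.1 s ∈ X s ∩ Set.univ)} =>
            ((∑ s ∈ Finset.Ico tt t', stageCost c d s (p.1.1 s) (p.1.2 s) : ℝ) : EReal)
              + ψ (p.1.1 t'))
          ⟨(q1, q2), hfeas⟩
        refine le_trans hle ?_
        have hsum : ∑ s ∈ Finset.Ico tt t', stageCost c d s (q1 s) (q2 s)
            = stageCost c d tt x u.1
              + ∑ s ∈ Finset.Ico (tt + 1) t', stageCost c d s (p'.1.1 s) (p'.1.2 s) := by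
          rw [Finset.sum_eq_sum_Ico_succ_bot h1]
          congr 1
          · simp [hq1, hq2]
          · refine Finset.sum_congr rfl fun s hs => ?_
            have hs' := Finset.mem_Ico.mp hs
            rw [hq1t s (by omega), hq2t s (by omega)]
        show ((∑ s ∈ Finset.Ico tt t', stageCost c d s (q1 s) (q2 s) : ℝ) : EReal)
            + ψ (q1 t') ≤ _
        rw [hsum, hq1t t' h1, EReal.coe_add, add_assoc,
          add_comm ((stageCost c d tt x u.1 : ℝ) : EReal)]
      calc blockOp A B c d U X Set.univ Set.univ tt t' ψ x
          ≤ blockOp A B c d U X Set.univ Set.univ (tt + 1) t' ψ x'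
              + (stageCost c d tt x u.1 : EReal) :=
            (EReal.sub_le_iff_le_add (Or.inl hf.1) (Or.inl hf.2)).mp hmain
        _ = (stageCost c d tt x u.1 : EReal)
              + blockOp A B c d U X Set.univ Set.univ (tt + 1) t' ψ x' := add_comm _ _
  intro x
  exact le_trans (hsub x) (key (t' - t) t (by omega) x)
end
end
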